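/- Let K be a Markov kernel from a Polish space X to a Polish space Y, and let a and b be finite signed measures on X and Y respectively with equal total mass ‖a‖(X) = ‖b‖(Y) and equal integral a(X) = b(Y). If aK = b, then the Jordan parts correspond exactly: a⁺K = b⁺ and a⁻K = b⁻. (Without the equal-mass assumption, one still has b⁺ ≤ a⁺K and b⁻ ≤ a⁻K whenever aK = b.) -/

import Mathlib

open MeasureTheory ProbabilityTheory Set
open scoped ENNReal

noncomputable section

/-- The image of a finite measure under a Markov kernel is finite. -/
instance bindIsFiniteMeasure {X Y : Type*} [MeasurableSpace X] [MeasurableSpace Y]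
    (μ : Measure X) [IsFiniteMeasure μ] (K : Kernel X Y) [IsMarkovKernel K] :
    IsFiniteMeasure (μ.bind K) := by
  constructor
  rw [Measure.bind_apply MeasurableSet.univ (Kernel.measurable K).aemeasurable]
  calc ∫⁻ x, (K x) Set.univ ∂μ = ∫⁻ _, 1 ∂μ := by simp
    _ = μ Set.univ := by simp
    _ < ⊤ := measure_lt_top μ _

/-- The image `aK := a⁺K − a⁻K` of a finite signed measure `a = a⁺ − a⁻` (Jordan
decomposition) under a Markov kernel `K`. -/
def signedKernelImage {X Y : Type*} [MeasurableSpace X] [MeasurableSpace Y]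
    (a : SignedMeasure X) (K : Kernel X Y) [IsMarkovKernel K] : SignedMeasure Y :=
  (a.toJordanDecomposition.posPart.bind K).toSignedMeasure
    - (a.toJordanDecomposition.negPart.bind K).toSignedMeasure


lemma jordan_min {Y : Type*} [MeasurableSpace Y] (p n : Measure Y)
    [IsFiniteMeasure p] [IsFiniteMeasure n] :
    (p.toSignedMeasure - n.toSignedMeasure).toJordanDecomposition.posPart ≤ p ∧
    (p.toSignedMeasure - n.toSignedMeasure).toJordanDecomposition.negPart ≤ n := by
  set b := p.toSignedMeasure - n.toSignedMeasure with hb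
  obtain ⟨i, hi₁, hi₂, hi₃, hμ, hν⟩ := b.toJordanDecomposition_spec
  constructor
  · rw [Measure.le_iff]
    intro s hs
    rw [hμ, SignedMeasure.toMeasureOfZeroLE_apply _ hi₂ hi₁ hs]
    have hnn : 0 ≤ b (i ∩ s) := VectorMeasure.nonneg_of_zero_le_restrict b
      (VectorMeasure.zero_le_restrict_subset b hi₁ Set.inter_subset_left hi₂)
    have hr : b (i ∩ s) ≤ (p s).toReal := by
      rw [hb, VectorMeasure.sub_apply,
        Measure.toSignedMeasure_apply_measurable (hi₁.inter hs),
        Measure.toSignedMeasure_apply_measurable (hi₁.inter hs)]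
      have h1 : (p (i ∩ s)).toReal ≤ (p s).toReal :=
        ENNReal.toReal_mono (measure_ne_top p s) (measure_mono inter_subset_right)
      have h2 : 0 ≤ (n (i ∩ s)).toReal := ENNReal.toReal_nonneg
      rw [measureReal_def, measureReal_def]
      linarith
    have := ENNReal.ofReal_le_of_le_toReal hr
    rwa [ENNReal.ofReal, Real.toNNReal_of_nonneg hnn] at this
  · rw [Measure.le_iff]
    intro s hs
    rw [hν, SignedMeasure.toMeasureOfLEZero_apply _ hi₃ hi₁.compl hs]
    have hnn : 0 ≤ -b (iᶜ ∩ s) := by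
      have h0 : (0:VectorMeasure Y ℝ) ≤[iᶜ] (-b) := by
        rw [← neg_zero]; exact VectorMeasure.neg_le_neg _ _ hi₁.compl hi₃
      have := VectorMeasure.nonneg_of_zero_le_restrict (-b)
        (VectorMeasure.zero_le_restrict_subset (-b) hi₁.compl
          (Set.inter_subset_left (t := s)) h0)
      simpa using this
    have hr : -b (iᶜ ∩ s) ≤ (n s).toReal := by
      rw [hb, VectorMeasure.sub_apply,
        Measure.toSignedMeasure_apply_measurable (hi₁.compl.inter hs),
        Measure.toSignedMeasure_apply_measurable (hi₁.compl.inter hs)]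
      have h1 : (n (iᶜ ∩ s)).toReal ≤ (n s).toReal :=
        ENNReal.toReal_mono (measure_ne_top n s) (measure_mono inter_subset_right)
      have h2 : 0 ≤ (p (iᶜ ∩ s)).toReal := ENNReal.toReal_nonneg
      rw [measureReal_def, measureReal_def]
      linarith
    have := ENNReal.ofReal_le_of_le_toReal hr
    rwa [ENNReal.ofReal, Real.toNNReal_of_nonneg hnn] at this

lemma eq_of_le_of_univ_le {Y : Type*} [MeasurableSpace Y] {μ ν : Measure Y}
    [IsFiniteMeasure ν] (h : μ ≤ ν) (h2 : ν Set.univ ≤ μ Set.univ) : μ = ν := by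
  ext s hs
  by_contra hne
  have hle : μ ≤ ν := h
  have hlt : μ s < ν s := lt_of_le_of_ne (h s) hne
  have : μ Set.univ < ν Set.univ := by
    rw [← measure_add_measure_compl hs, ← measure_add_measure_compl (μ := ν) hs]
    exact ENNReal.add_lt_add_of_lt_of_le
      (((h sᶜ).trans_lt (measure_lt_top ν sᶜ)).ne) hlt (h sᶜ)
  exact absurd h2 (not_le.mpr this)

lemma bind_univ_eq {X Y : Type*} [MeasurableSpace X] [MeasurableSpace Y]
    (μ : Measure X) (K : Kernel X Y) [IsMarkovKernel K] :
    (μ.bind K) Set.univ = μ Set.univ := by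
  rw [Measure.bind_apply MeasurableSet.univ (Kernel.measurable K).aemeasurable]
  simp

/-- If `K` is a Markov kernel and `a`, `b` are finite signed measures
with equal total mass and equal integral such that `aK = b`, then the Jordan parts
correspond exactly: `a⁺K = b⁺` and `a⁻K = b⁻`.  Without the equal-mass assumption one
still has `b⁺ ≤ a⁺K` and `b⁻ ≤ a⁻K` whenever `aK = b`. -/
theorem stmt9 {X Y : Type*}
    [MeasurableSpace X] [TopologicalSpace X] [PolishSpace X] [BorelSpace X]
    [MeasurableSpace Y] [TopologicalSpace Y] [PolishSpace Y] [BorelSpace Y]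
    (K : Kernel X Y) [IsMarkovKernel K] :
    (∀ (a : SignedMeasure X) (b : SignedMeasure Y),
      a.totalVariation Set.univ = b.totalVariation Set.univ →
      a Set.univ = b Set.univ →
      signedKernelImage a K = b →
      a.toJordanDecomposition.posPart.bind K = b.toJordanDecomposition.posPart ∧
        a.toJordanDecomposition.negPart.bind K = b.toJordanDecomposition.negPart) ∧
    (∀ (a : SignedMeasure X) (b : SignedMeasure Y),
      signedKernelImage a K = b →
      b.toJordanDecomposition.posPart ≤ a.toJordanDecomposition.posPart.bind K ∧
        b.toJordanDecomposition.negPart ≤ a.toJordanDecomposition.negPart.bind K) := by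
  have main : ∀ (a : SignedMeasure X) (b : SignedMeasure Y),
      signedKernelImage a K = b →
      b.toJordanDecomposition.posPart ≤ a.toJordanDecomposition.posPart.bind K ∧
        b.toJordanDecomposition.negPart ≤ a.toJordanDecomposition.negPart.bind K := by
    intro a b hab
    have key := jordan_min (a.toJordanDecomposition.posPart.bind K)
      (a.toJordanDecomposition.negPart.bind K)
    rwa [show (a.toJordanDecomposition.posPart.bind K).toSignedMeasure -
        (a.toJordanDecomposition.negPart.bind K).toSignedMeasure = signedKernelImage a K from rfl,
      hab] at key
  refine ⟨?_, main⟩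
  intro a b htv _hint hab
  obtain ⟨h1, h2⟩ := main a b hab
  set p := a.toJordanDecomposition.posPart.bind K with hp
  set n := a.toJordanDecomposition.negPart.bind K with hn
  have hmass : b.toJordanDecomposition.posPart Set.univ +
      b.toJordanDecomposition.negPart Set.univ = p Set.univ + n Set.univ := by
    rw [hp, hn, bind_univ_eq, bind_univ_eq]
    have := htv.symm
    rwa [SignedMeasure.totalVariation, SignedMeasure.totalVariation,
      Measure.add_apply, Measure.add_apply] at this
  have hpu : p Set.univ ≤ b.toJordanDecomposition.posPart Set.univ := by
    by_contra hc
    push_neg at hc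
    have : b.toJordanDecomposition.posPart Set.univ +
        b.toJordanDecomposition.negPart Set.univ < p Set.univ + n Set.univ :=
      ENNReal.add_lt_add_of_lt_of_le (measure_ne_top b.toJordanDecomposition.negPart Set.univ) hc (h2 Set.univ)
    exact absurd hmass this.ne
  have hnu : n Set.univ ≤ b.toJordanDecomposition.negPart Set.univ := by
    by_contra hc
    push_neg at hc
    have : b.toJordanDecomposition.posPart Set.univ +
        b.toJordanDecomposition.negPart Set.univ < p Set.univ + n Set.univ := by
      rw [add_comm (b.toJordanDecomposition.posPart Set.univ),
        add_comm (p Set.univ)]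
      exact ENNReal.add_lt_add_of_lt_of_le (measure_ne_top b.toJordanDecomposition.posPart Set.univ) hc (h1 Set.univ)
    exact absurd hmass this.ne
  exact ⟨(eq_of_le_of_univ_le h1 hpu).symm, (eq_of_le_of_univ_le h2 hnu).symm⟩
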